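/- arXiv:1704.02924 — 7 statements merged into one kernel-verified Lean document; each statement's English description precedes it below -/
import Mathlib

section
/- For every n ≥ 1, the solution of the non-commutative recurrence satisfies x_n = Σ_{S} W^n_S x_0, where the sum runs over all sparse subsets S of {1,…,n−1}; equivalently, x_n = Σ_{ℓ=0}^{⌊n/2⌋} Σ_{1 ≤ i₁, i₁+1 < i₂, …, i_{ℓ−1}+1 < i_ℓ ≤ n−1} W^n_{{i₁,…,i_ℓ}} x_0. -/
/-- The collection of sparse subsets of `{1, …, n-1}`: subsets `S ⊆ {1, …, n-1}` such that
`i ∈ S` implies `i + 1 ∉ S`. -/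
def sparseSets (n : ℕ) : Finset (Finset ℕ) :=
  (Finset.Icc 1 (n - 1)).powerset.filter fun S => ∀ i ∈ S, i + 1 ∉ S

/-- The operator `W^n_S`: the composition of the factors associated to the positions
`n, n-1, …, 1` taken in decreasing order, in which for each `i ∈ S` the pair of consecutive
positions `i+1` and `i` together contributes a single factor `B`, while every position `j`
with `j ∉ S` and `j - 1 ∉ S` contributes a factor `A`; by convention `W^0_∅` is the
identity. -/
def Wop {K X : Type*} [Field K] [AddCommGroup X] [Module K X]
    (A B : Module.End K X) : ℕ → Finset ℕ → Module.End K X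
  | 0, _ => 1
  | 1, _ => A
  | n + 2, S => if n + 1 ∈ S then B * Wop A B n S else A * Wop A B (n + 1) S

lemma mem_sparseSets {n : ℕ} {S : Finset ℕ} :
    S ∈ sparseSets n ↔ S ⊆ Finset.Icc 1 (n - 1) ∧ ∀ i ∈ S, i + 1 ∉ S := by
  simp [sparseSets]

lemma Wop_insert {K X : Type*} [Field K] [AddCommGroup X] [Module K X]
    (A B : Module.End K X) : ∀ (n m : ℕ) (S : Finset ℕ), n ≤ m →
    Wop A B n (insert m S) = Wop A B n S := by
  intro n
  induction n using Nat.strong_induction_on with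
  | _ n ih =>
    match n with
    | 0 => intro m S h; rfl
    | 1 => intro m S h; rfl
    | n + 2 =>
      intro m S h
      have hne : (n + 1 : ℕ) ≠ m := by omega
      simp only [Wop, Finset.mem_insert, hne, false_or]
      by_cases hmem : n + 1 ∈ S
      · simp [hmem, ih n (by omega) m S (by omega)]
      · simp [hmem, ih (n+1) (by omega) m S (by omega)]

lemma sparseSets_low (n : ℕ) (h : n ≤ 1) : sparseSets n = {∅} := by
  ext S
  simp only [mem_sparseSets, Finset.mem_singleton]
  rw [show n - 1 = 0 by omega, Finset.Icc_eq_empty (by omega), Finset.subset_empty]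
  constructor
  · rintro ⟨rfl, -⟩; rfl
  · rintro rfl; simp

lemma sparse_filter_not (n : ℕ) :
    (sparseSets (n+2)).filter (fun S => n + 1 ∉ S) = sparseSets (n+1) := by
  ext S
  simp only [Finset.mem_filter, mem_sparseSets]
  constructor
  · rintro ⟨⟨hsub, hsp⟩, hni⟩
    refine ⟨fun i hi => ?_, hsp⟩
    have := hsub hi
    simp only [Finset.mem_Icc] at this ⊢
    have : i ≠ n + 1 := fun h => hni (h ▸ hi)
    omega
  · rintro ⟨hsub, hsp⟩
    have hni : n + 1 ∉ S := fun h => by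
      have := hsub h; simp only [Finset.mem_Icc] at this; omega
    refine ⟨⟨fun i hi => ?_, hsp⟩, hni⟩
    have := hsub hi
    simp only [Finset.mem_Icc] at this ⊢
    omega

lemma sparse_filter_sum {M : Type*} [AddCommMonoid M] (f : Finset ℕ → M) (n : ℕ) :
    ∑ S ∈ (sparseSets (n+2)).filter (fun S => n + 1 ∈ S), f S
      = ∑ S ∈ sparseSets n, f (insert (n+1) S) := by
  refine Finset.sum_bij' (fun S _ => S.erase (n+1)) (fun S _ => insert (n+1) S)
    ?_ ?_ ?_ ?_ ?_
  · intro S hS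
    simp only [Finset.mem_filter, mem_sparseSets] at hS
    obtain ⟨⟨hsub, hsp⟩, hmem⟩ := hS
    rw [mem_sparseSets]
    constructor
    · intro i hi
      simp only [Finset.mem_erase] at hi
      have h1 := hsub hi.2
      simp only [Finset.mem_Icc] at h1 ⊢
      have : i ≠ n := by
        rintro rfl; exact hsp _ hi.2 hmem
      omega
    · intro i hi
      exact fun h => hsp i (Finset.mem_of_mem_erase hi) (Finset.mem_of_mem_erase h)
  · intro S hS
    rw [mem_sparseSets] at hS
    obtain ⟨hsub, hsp⟩ := hS
    have hout : ∀ i ∈ S, i ≤ n - 1 ∧ 1 ≤ i := by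
      intro i hi; have := hsub hi; simp only [Finset.mem_Icc] at this; omega
    simp only [Finset.mem_filter, mem_sparseSets]
    refine ⟨⟨?_, ?_⟩, Finset.mem_insert_self _ _⟩
    · intro i hi
      rcases Finset.mem_insert.mp hi with rfl | hi
      · simp only [Finset.mem_Icc]; omega
      · have := hout i hi; simp only [Finset.mem_Icc]; omega
    · intro i hi
      rcases Finset.mem_insert.mp hi with rfl | hi
      · intro h
        rcases Finset.mem_insert.mp h with h | h
        · omega
        · have := hout _ h; omega
      · intro h
        rcases Finset.mem_insert.mp h with h | h
        · have := hout i hi; omega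
        · exact hsp i hi h
  · intro S hS
    simp only [Finset.mem_filter] at hS
    exact Finset.insert_erase hS.2
  · intro S hS
    rw [mem_sparseSets] at hS
    have : n + 1 ∉ S := fun h => by
      have := hS.1 h; simp only [Finset.mem_Icc] at this; omega
    exact Finset.erase_insert this
  · intro S hS
    simp only [Finset.mem_filter] at hS
    rw [Finset.insert_erase hS.2]

/-- For every `n ≥ 1`, the solution of the non-commutative recurrence
`x n = A (x (n-1)) + B (x (n-2))` with initial conditions `x 0` and `x 1 = A (x 0)`
satisfies `x n = ∑_{S sparse ⊆ {1,…,n-1}} W^n_S (x 0)`. -/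
theorem solution_as_sum_over_sparse_subsets {K X : Type*} [Field K] [AddCommGroup X]
    [Module K X] (A B : Module.End K X) (x : ℕ → X)
    (hrec : ∀ n, 2 ≤ n → x n = A (x (n - 1)) + B (x (n - 2)))
    (h1 : x 1 = A (x 0)) :
    ∀ n, 1 ≤ n → x n = ∑ S ∈ sparseSets n, Wop A B n S (x 0) := by
  have key : ∀ n, x n = ∑ S ∈ sparseSets n, Wop A B n S (x 0) := by
    intro n
    induction n using Nat.strong_induction_on with
    | _ n ih =>
      match n with
      | 0 => rw [sparseSets_low 0 (by omega)]; simp [Wop]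
      | 1 => rw [sparseSets_low 1 (by omega)]; simpa [Wop] using h1
      | n + 2 =>
        rw [← Finset.sum_filter_add_sum_filter_not (sparseSets (n+2)) (fun S => n + 1 ∈ S),
          sparse_filter_not, sparse_filter_sum]
        have e1 : ∀ S ∈ sparseSets (n+1), Wop A B (n+2) S (x 0) = A (Wop A B (n+1) S (x 0)) := by
          intro S hS
          rw [mem_sparseSets] at hS
          have : n + 1 ∉ S := fun h => by
            have := hS.1 h; simp only [Finset.mem_Icc] at this; omega
          simp [Wop, this, Module.End.mul_apply]
        have e2 : ∀ S ∈ sparseSets n, Wop A B (n+2) (insert (n+1) S) (x 0)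
            = B (Wop A B n S (x 0)) := by
          intro S hS
          simp [Wop, Finset.mem_insert_self, Wop_insert A B n (n+1) S (by omega),
            Module.End.mul_apply]
        rw [Finset.sum_congr rfl e1, Finset.sum_congr rfl e2,
          hrec (n+2) (by omega)]
        simp only [show n + 2 - 1 = n + 1 from rfl, show n + 2 - 2 = n from rfl,
          ih (n+1) (by omega), ih n (by omega), map_sum]
        abel
  exact fun n _ => key n
end

section
/- For every n ≥ 2 the following operator identity on X holds: Σ_{S sparse ⊆ {1,…,n−1}} W^n_S = â ∘ (Σ_{S sparse ⊆ {1,…,n−2}} W^{n−1}_S) + b̂ ∘ (Σ_{S sparse ⊆ {1,…,n−3}} W^{n−2}_S), where for n = 2 the last sum consists of the single term W^0_∅ = id. -/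
lemma Wop_congr {K X : Type*} [Field K] [AddCommGroup X] [Module K X]
    (A B : Module.End K X) : ∀ (n : ℕ) (S T : Finset ℕ),
    (∀ i, i < n → (i ∈ S ↔ i ∈ T)) → Wop A B n S = Wop A B n T
  | 0, _, _, _ => rfl
  | 1, _, _, _ => rfl
  | n + 2, S, T, h => by
    simp only [Wop]
    by_cases hc : n + 1 ∈ T
    · rw [if_pos hc, if_pos ((h (n+1) (by omega)).2 hc),
        Wop_congr A B n S T (fun i hi => h i (by omega))]
    · rw [if_neg hc, if_neg (fun hs => hc ((h (n+1) (by omega)).1 hs)),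
        Wop_congr A B (n+1) S T (fun i hi => h i (by omega))]

/-- For every `n ≥ 2` the operator identity
`∑_{S sparse ⊆ {1,…,n-1}} W^n_S
  = A ∘ (∑_{S sparse ⊆ {1,…,n-2}} W^{n-1}_S) + B ∘ (∑_{S sparse ⊆ {1,…,n-3}} W^{n-2}_S)`
holds; for `n = 2` the last sum consists of the single term `W^0_∅ = id`. -/
theorem sparse_sum_recurrence {K X : Type*} [Field K] [AddCommGroup X] [Module K X]
    (A B : Module.End K X) (n : ℕ) (hn : 2 ≤ n) :
    ∑ S ∈ sparseSets n, Wop A B n S =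
      A * (∑ S ∈ sparseSets (n - 1), Wop A B (n - 1) S) +
        B * (∑ S ∈ sparseSets (n - 2), Wop A B (n - 2) S) := by
  obtain ⟨m, rfl⟩ : ∃ m, n = m + 2 := ⟨n - 2, by omega⟩
  have h1 : m + 2 - 1 = m + 1 := rfl
  have h2 : m + 2 - 2 = m := rfl
  rw [h1, h2]
  rw [← Finset.sum_filter_add_sum_filter_not (sparseSets (m+2)) (fun S => m + 1 ∈ S)]
  rw [add_comm]
  congr 1
  · -- sets not containing m+1
    have hset : (sparseSets (m+2)).filter (fun S => ¬ m + 1 ∈ S) = sparseSets (m+1) := by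
      ext S
      simp only [sparseSets, Finset.mem_filter, Finset.mem_powerset]
      constructor
      · rintro ⟨⟨hsub, hsp⟩, hni⟩
        refine ⟨fun x hx => ?_, hsp⟩
        have := hsub hx
        simp only [Finset.mem_Icc] at this ⊢
        have : x ≠ m + 1 := fun h => hni (h ▸ hx)
        omega
      · rintro ⟨hsub, hsp⟩
        have hni : m + 1 ∉ S := fun h => by
          have := hsub h; simp only [Finset.mem_Icc] at this; omega
        refine ⟨⟨fun x hx => ?_, hsp⟩, hni⟩
        have := hsub hx
        simp only [Finset.mem_Icc] at this ⊢
        omega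
    rw [hset, Finset.mul_sum]
    refine Finset.sum_congr rfl fun S hS => ?_
    have hni : m + 1 ∉ S := by
      simp only [sparseSets, Finset.mem_filter, Finset.mem_powerset] at hS
      intro h
      have := hS.1 h; simp only [Finset.mem_Icc] at this; omega
    show Wop A B (m+2) S = _
    simp only [Wop, if_neg hni]
  · -- sets containing m+1
    rw [Finset.mul_sum]
    refine Finset.sum_nbij' (fun S => S.erase (m+1)) (fun T => insert (m+1) T)
      ?_ ?_ ?_ ?_ ?_
    · intro S hS
      simp only [sparseSets, Finset.mem_filter, Finset.mem_powerset] at hS ⊢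
      obtain ⟨⟨hsub, hsp⟩, hmem⟩ := hS
      have hm : m ∉ S := fun h => hsp m h hmem
      refine ⟨fun x hx => ?_, fun i hi => fun h => hsp i (Finset.mem_of_mem_erase hi)
        (Finset.mem_of_mem_erase h)⟩
      have hx1 := Finset.mem_of_mem_erase hx
      have hx2 := Finset.ne_of_mem_erase hx
      have := hsub hx1
      simp only [Finset.mem_Icc] at this ⊢
      have : x ≠ m := fun h => hm (h ▸ hx1)
      omega
    · intro T hT
      simp only [sparseSets, Finset.mem_filter, Finset.mem_powerset] at hT ⊢
      obtain ⟨hsub, hsp⟩ := hT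
      have hbound : ∀ x ∈ T, 1 ≤ x ∧ x ≤ m - 1 := by
        intro x hx; have := hsub hx; simpa using this
      refine ⟨⟨fun x hx => ?_, fun i hi h => ?_⟩, Finset.mem_insert_self _ _⟩
      · rcases Finset.mem_insert.1 hx with h | h
        · simp [h]
        · have := hbound x h; simp only [Finset.mem_Icc]; omega
      · rcases Finset.mem_insert.1 hi with rfl | hi'
        · rcases Finset.mem_insert.1 h with h' | h'
          · omega
          · have := hbound _ h'; omega
        · rcases Finset.mem_insert.1 h with h' | h'
          · have := hbound _ hi'; omega
          · exact hsp i hi' h'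
    · intro S hS
      simp only [sparseSets, Finset.mem_filter, Finset.mem_powerset] at hS
      exact Finset.insert_erase hS.2
    · intro T hT
      simp only [sparseSets, Finset.mem_filter, Finset.mem_powerset] at hT
      have : m + 1 ∉ T := fun h => by
        have := hT.1 h; simp only [Finset.mem_Icc] at this; omega
      exact Finset.erase_insert this
    · intro S hS
      simp only [sparseSets, Finset.mem_filter, Finset.mem_powerset] at hS
      have hmem : m + 1 ∈ S := hS.2
      show Wop A B (m+2) S = B * Wop A B m (S.erase (m+1))
      simp only [Wop, if_pos hmem]
      congr 1
      exact Wop_congr A B m S (S.erase (m+1))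
        (fun i hi => by simp [Finset.mem_erase]; omega)
end

section
/- Let n ≥ 1 and let S = {i₁ < i₂ < ⋯ < i_ℓ} be a sparse subset of {1,…,n−1}. Then δ_{i₁}(δ_{i₂}(⋯ δ_{i_ℓ}(P_n) ⋯)) = (∏_{k=1}^{ℓ} b_{i_k}) · ∏_{j} a_j, where the last product runs over all j ∈ {1,…,n} with j ∉ S and j−1 ∉ S. In other words, applying the operators δ_i for i ∈ S to the monomial a_n a_{n−1} ⋯ a_1 replaces, for each i ∈ S, the adjacent pair of factors a_{i+1} a_i by the single factor b_i. -/
open MvPolynomial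

/-- The monomial `P_n = a_n a_{n-1} ⋯ a_1` in the polynomial ring over `R` in the two
families of indeterminates `a_i = X (Sum.inl i)` and `b_i = X (Sum.inr i)`
(`b_i` plays the role of the symbol `b_{i+1,i}`); `P_0 = 1`. -/
noncomputable def Pmono (R : Type*) [CommRing R] (n : ℕ) : MvPolynomial (ℕ ⊕ ℕ) R :=
  ∏ j ∈ Finset.Icc 1 n, X (Sum.inl j)

/-- The operator `δ_i p = b_i • ∂_{a_{i+1}} ∂_{a_i} p`: multiplication by the variable
`b_i = X (Sum.inr i)` composed with the formal partial derivatives with respect to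
`a_{i+1}` and `a_i`. -/
noncomputable def deltaOp {R : Type*} [CommRing R] (i : ℕ)
    (p : MvPolynomial (ℕ ⊕ ℕ) R) : MvPolynomial (ℕ ⊕ ℕ) R :=
  X (Sum.inr i) * pderiv (Sum.inl (i + 1)) (pderiv (Sum.inl i) p)


lemma pderiv_prod_X {R : Type*} [CommRing R] (k : ℕ) (t : Finset ℕ) :
    pderiv (Sum.inl k) (∏ j ∈ t, X (Sum.inl j) : MvPolynomial (ℕ ⊕ ℕ) R) =
      if k ∈ t then ∏ j ∈ t.erase k, X (Sum.inl j) else 0 := by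
  classical
  induction t using Finset.induction_on with
  | empty => simp
  | @insert a s ha ih =>
    rw [Finset.prod_insert ha, Derivation.leibniz, ih]
    by_cases hk : k = a
    · subst hk
      simp [ha, Finset.erase_insert ha]
    · rw [pderiv_X_of_ne (by simp [Ne.symm hk])]
      by_cases hks : k ∈ s
      · rw [if_pos hks, if_pos (Finset.mem_insert_of_mem hks), smul_zero, add_zero, smul_eq_mul,
          Finset.erase_insert_of_ne (fun h => hk h.symm),
          Finset.prod_insert (fun h => ha (Finset.mem_of_mem_erase h))]
      · simp [hk, hks]

lemma pderiv_prod_X_inr {R : Type*} [CommRing R] (k : ℕ) (t : Finset ℕ) :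
    pderiv (Sum.inl k) (∏ j ∈ t, X (Sum.inr j) : MvPolynomial (ℕ ⊕ ℕ) R) = 0 := by
  classical
  induction t using Finset.induction_on with
  | empty => simp
  | @insert a s ha ih =>
    rw [Finset.prod_insert ha, Derivation.leibniz, ih, pderiv_X_of_ne (by simp)]
    simp

theorem delta_sparse_eval' {R : Type*} [CommRing R] (n : ℕ) (hn : 1 ≤ n) :
    ∀ (S : Finset ℕ), S ⊆ Finset.Icc 1 (n - 1) → (∀ i ∈ S, i + 1 ∉ S) →
    (S.sort (· ≤ ·)).foldr (fun i q => deltaOp i q) (Pmono R n) =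
      (∏ i ∈ S, X (Sum.inr i)) *
        ∏ j ∈ (Finset.Icc 1 n).filter (fun j => j ∉ S ∧ j - 1 ∉ S), X (Sum.inl j) := by
  classical
  intro S
  induction S using Finset.strongInductionOn with
  | _ S ih =>
    intro hS hsparse
    rcases S.eq_empty_or_nonempty with rfl | hne
    · simp [Pmono]
    · set m := S.min' hne with hm
      have hmS : m ∈ S := S.min'_mem hne
      set S' := S.erase m with hS'
      have hins : S = insert m S' := by
        rw [hS', Finset.insert_erase hmS]
      have hmnot : m ∉ S' := Finset.notMem_erase m S
      have hsub' : S' ⊆ S := Finset.erase_subset m S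
      have hsort : S.sort (· ≤ ·) = m :: S'.sort (· ≤ ·) := by
        rw [hins]
        exact Finset.sort_insert _ (fun b hb => S.min'_le b (hsub' hb)) hmnot
      have hScard : S' ⊂ S := Finset.erase_ssubset hmS
      have hrec := ih S' hScard (hsub'.trans hS) (fun i hi => fun h => hsparse i (hsub' hi) (hsub' h))
      rw [hsort]
      simp only [List.foldr_cons, hrec]
      -- m facts
      have hm1 : 1 ≤ m := (Finset.mem_Icc.mp (hS hmS)).1
      have hmn : m ≤ n - 1 := (Finset.mem_Icc.mp (hS hmS)).2
      have hmn' : m + 1 ≤ n := by omega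
      have hmT : m ∈ (Finset.Icc 1 n).filter (fun j => j ∉ S' ∧ j - 1 ∉ S') := by
        refine Finset.mem_filter.mpr ⟨Finset.mem_Icc.mpr ⟨hm1, by omega⟩, hmnot, fun h => ?_⟩
        have := S.min'_le _ (hsub' h); omega
      have hm1T : m + 1 ∈ ((Finset.Icc 1 n).filter (fun j => j ∉ S' ∧ j - 1 ∉ S')).erase m := by
        refine Finset.mem_erase.mpr ⟨by omega, Finset.mem_filter.mpr ⟨Finset.mem_Icc.mpr ⟨by omega, hmn'⟩,
          fun h => hsparse m hmS (hsub' h), by simpa using hmnot⟩⟩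
      rw [deltaOp, Derivation.leibniz, pderiv_prod_X_inr, pderiv_prod_X, if_pos hmT,
        smul_zero, add_zero, smul_eq_mul, Derivation.leibniz, pderiv_prod_X_inr,
        pderiv_prod_X, if_pos hm1T, smul_zero, add_zero, smul_eq_mul]
      have hTeq : (((Finset.Icc 1 n).filter (fun j => j ∉ S' ∧ j - 1 ∉ S')).erase m).erase (m + 1)
          = (Finset.Icc 1 n).filter (fun j => j ∉ S ∧ j - 1 ∉ S) := by
        ext j
        simp only [Finset.mem_erase, Finset.mem_filter, Finset.mem_Icc, hins,
          Finset.mem_insert, not_or]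
        constructor
        · rintro ⟨h1, h2, ⟨h3, h4⟩, h5, h6⟩
          exact ⟨⟨h3, h4⟩, ⟨h2, h5⟩, by omega, h6⟩
        · rintro ⟨⟨h3, h4⟩, ⟨h2, h5⟩, h6, h7⟩
          exact ⟨by omega, h2, ⟨h3, h4⟩, h5, h7⟩
      rw [hTeq, hins, Finset.prod_insert hmnot]
      ring

/-- For a sparse subset `S = {i₁ < ⋯ < i_ℓ} ⊆ {1,…,n-1}`, applying
`δ_{i₁}(δ_{i₂}(⋯ δ_{i_ℓ}(P_n) ⋯))` replaces, for each `i ∈ S`, the adjacent pair of factors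
`a_{i+1} a_i` in the monomial `a_n ⋯ a_1` by the single factor `b_i`:
the result is `(∏_{i ∈ S} b_i) · ∏_{j ∈ {1,…,n}, j ∉ S, j-1 ∉ S} a_j`. -/
theorem delta_sparse_eval {R : Type*} [CommRing R] (n : ℕ) (hn : 1 ≤ n)
    (S : Finset ℕ) (hS : S ⊆ Finset.Icc 1 (n - 1)) (hsparse : ∀ i ∈ S, i + 1 ∉ S) :
    (S.sort (· ≤ ·)).foldr (fun i q => deltaOp i q) (Pmono R n) =
      (∏ i ∈ S, X (Sum.inr i)) *
        ∏ j ∈ (Finset.Icc 1 n).filter (fun j => j ∉ S ∧ j - 1 ∉ S), X (Sum.inl j) := by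
  exact delta_sparse_eval' n hn S hS hsparse
end

section
/- Let n ≥ 1 and let i₁, …, i_ℓ be any finite sequence of indices in {1,…,n−1} (repetitions allowed). If there exist positions p ≠ q with |i_p − i_q| ≤ 1 (in particular if two of the indices coincide, or if two of them are consecutive integers), then δ_{i₁}(δ_{i₂}(⋯ δ_{i_ℓ}(P_n) ⋯)) = 0. -/
open MvPolynomial

section Aux
variable {R : Type*} [CommRing R]

lemma pderiv_as_sum (i : ℕ ⊕ ℕ) (p : MvPolynomial (ℕ ⊕ ℕ) R) :
    pderiv i p = ∑ m ∈ p.support, monomial (m - Finsupp.single i 1) (coeff m p * m i) := by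
  conv_lhs => rw [p.as_sum, map_sum]
  exact Finset.sum_congr rfl fun m _ => pderiv_monomial

lemma deg_mono_le (v : ℕ ⊕ ℕ) (s : (ℕ ⊕ ℕ) →₀ ℕ) (a : R) :
    degreeOf v (monomial s a) ≤ s v := by
  rw [degreeOf_le_iff]
  intro m' hm'
  classical
  rw [support_monomial] at hm'
  split_ifs at hm' with h
  · simp at hm'
  · simp only [Finset.mem_singleton] at hm'
    subst hm'
    exact le_rfl

lemma mem_supp_le_degreeOf (v : ℕ ⊕ ℕ) (p : MvPolynomial (ℕ ⊕ ℕ) R)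
    {m : (ℕ ⊕ ℕ) →₀ ℕ} (hm : m ∈ p.support) : m v ≤ degreeOf v p := by
  rw [degreeOf_eq_sup]
  exact Finset.le_sup (f := fun m : (ℕ ⊕ ℕ) →₀ ℕ => m v) hm

lemma degreeOf_pderiv_le (v i : ℕ ⊕ ℕ) (p : MvPolynomial (ℕ ⊕ ℕ) R) :
    degreeOf v (pderiv i p) ≤ degreeOf v p := by
  rw [pderiv_as_sum]
  refine le_trans (degreeOf_sum_le _ _ _) (Finset.sup_le fun m hm => ?_)
  refine le_trans (deg_mono_le _ _ _) ?_
  refine le_trans ?_ (mem_supp_le_degreeOf v p hm)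
  rw [Finsupp.tsub_apply]
  exact Nat.sub_le _ _

lemma degreeOf_pderiv_self (i : ℕ ⊕ ℕ) (p : MvPolynomial (ℕ ⊕ ℕ) R)
    (h : degreeOf i p ≤ 1) : degreeOf i (pderiv i p) = 0 := by
  rw [pderiv_as_sum]
  refine Nat.le_zero.mp (le_trans (degreeOf_sum_le _ _ _) (Finset.sup_le fun m hm => ?_))
  refine le_trans (deg_mono_le _ _ _) ?_
  rcases Nat.eq_zero_or_pos (m i) with h0 | h1
  · rw [Finsupp.tsub_apply, h0]
    simp
  · have hmi : m i ≤ 1 := le_trans (mem_supp_le_degreeOf i p hm) h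
    rw [Finsupp.tsub_apply, Finsupp.single_eq_same]
    omega

lemma pderiv_eq_zero_of_degreeOf_eq_zero (i : ℕ ⊕ ℕ) (p : MvPolynomial (ℕ ⊕ ℕ) R)
    (h : degreeOf i p = 0) : pderiv i p = 0 := by
  apply pderiv_eq_zero_of_notMem_vars
  intro hv
  rw [mem_vars] at hv
  obtain ⟨d, hd, hdi⟩ := hv
  have hle : d i ≤ 0 := h ▸ mem_supp_le_degreeOf i p hd
  exact (Finsupp.mem_support_iff.mp hdi) (Nat.le_zero.mp hle)

lemma deg_prod_notmem (v : ℕ) (s : Finset ℕ) (hv : v ∉ s) :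
    degreeOf (Sum.inl v) (∏ j ∈ s, (X (Sum.inl j) : MvPolynomial (ℕ ⊕ ℕ) R)) = 0 := by
  classical
  induction s using Finset.induction with
  | empty =>
    rw [Finset.prod_empty, show (1 : MvPolynomial (ℕ ⊕ ℕ) R) = C 1 from (map_one C).symm,
      degreeOf_C]
  | @insert a s ha ih =>
    rw [Finset.prod_insert ha, mul_comm, degreeOf_mul_X_of_ne]
    · exact ih (fun h => hv (Finset.mem_insert_of_mem h))
    · simp only [ne_eq, Sum.inl.injEq]
      intro h
      exact hv (h ▸ Finset.mem_insert_self a s)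

lemma deg_prod_le_one (v : ℕ) (s : Finset ℕ) :
    degreeOf (Sum.inl v) (∏ j ∈ s, (X (Sum.inl j) : MvPolynomial (ℕ ⊕ ℕ) R)) ≤ 1 := by
  classical
  induction s using Finset.induction with
  | empty =>
    rw [Finset.prod_empty, show (1 : MvPolynomial (ℕ ⊕ ℕ) R) = C 1 from (map_one C).symm,
      degreeOf_C]
    exact Nat.zero_le 1
  | @insert a s ha ih =>
    rw [Finset.prod_insert ha, mul_comm]
    by_cases hva : v = a
    · subst hva
      refine le_trans (degreeOf_mul_X_self _ _) ?_
      rw [deg_prod_notmem v s ha]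
    · rw [degreeOf_mul_X_of_ne]
      · exact ih
      · simp [hva]

lemma degreeOf_inl_deltaOp (v i : ℕ) (p : MvPolynomial (ℕ ⊕ ℕ) R) :
    degreeOf (Sum.inl v) (deltaOp i p)
      = degreeOf (Sum.inl v) (pderiv (Sum.inl (i+1)) (pderiv (Sum.inl i) p)) := by
  rw [deltaOp, mul_comm, degreeOf_mul_X_of_ne]
  simp

lemma fold_invariant (n : ℕ) (l : List ℕ) :
    (∀ v : ℕ, degreeOf (Sum.inl v) (l.foldr (fun i r => deltaOp i r) (Pmono R n)) ≤ 1) ∧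
    (∀ i ∈ l, degreeOf (Sum.inl i) (l.foldr (fun i r => deltaOp i r) (Pmono R n)) = 0 ∧
      degreeOf (Sum.inl (i+1)) (l.foldr (fun i r => deltaOp i r) (Pmono R n)) = 0) := by
  induction l with
  | nil =>
    refine ⟨fun v => ?_, by simp⟩
    simpa [Pmono] using deg_prod_le_one (R := R) v (Finset.Icc 1 n)
  | cons i l ih =>
    obtain ⟨ih1, ih2⟩ := ih
    set r := l.foldr (fun i r => deltaOp i r) (Pmono R n) with hr
    have step : ∀ v : ℕ, degreeOf (Sum.inl v) (deltaOp i r)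
        ≤ degreeOf (Sum.inl v) r := fun v => by
      rw [degreeOf_inl_deltaOp]
      exact le_trans (degreeOf_pderiv_le _ _ _) (degreeOf_pderiv_le _ _ _)
    refine ⟨fun v => le_trans (step v) (ih1 v), ?_⟩
    intro j hj
    rcases List.mem_cons.mp hj with hji | hjl
    · subst hji
      constructor
      · show degreeOf (Sum.inl j) (deltaOp j r) = 0
        rw [degreeOf_inl_deltaOp]
        refine Nat.le_zero.mp (le_trans (degreeOf_pderiv_le _ _ _) ?_)
        rw [degreeOf_pderiv_self _ _ (ih1 j)]
      · show degreeOf (Sum.inl (j+1)) (deltaOp j r) = 0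
        rw [degreeOf_inl_deltaOp]
        exact degreeOf_pderiv_self _ _ (le_trans (degreeOf_pderiv_le _ _ _) (ih1 (j+1)))
    · obtain ⟨h1, h2⟩ := ih2 j hjl
      constructor
      · exact Nat.le_zero.mp (le_trans (step j) (Nat.le_zero.mpr h1))
      · exact Nat.le_zero.mp (le_trans (step (j+1)) (Nat.le_zero.mpr h2))

lemma deltaOp_zero (i : ℕ) : deltaOp (R := R) i 0 = 0 := by
  simp [deltaOp]

lemma foldr_delta_zero (l : List ℕ) :
    l.foldr (fun i r => deltaOp i r) (0 : MvPolynomial (ℕ ⊕ ℕ) R) = 0 := by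
  induction l with
  | nil => rfl
  | cons i l ih => simp [ih, deltaOp_zero]

lemma deltaOp_close_zero (i j : ℕ) (p : MvPolynomial (ℕ ⊕ ℕ) R)
    (h1 : degreeOf (Sum.inl j) p = 0) (h2 : degreeOf (Sum.inl (j+1)) p = 0)
    (hij : i = j ∨ i = j + 1 ∨ i + 1 = j) : deltaOp i p = 0 := by
  rcases hij with h | h | h
  · subst h
    rw [deltaOp, pderiv_eq_zero_of_degreeOf_eq_zero _ _ h1]
    simp
  · subst h
    rw [deltaOp, pderiv_eq_zero_of_degreeOf_eq_zero _ _ h2]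
    simp
  · have : degreeOf (Sum.inl (i+1)) (pderiv (Sum.inl i) p) = 0 :=
      Nat.le_zero.mp (le_trans (degreeOf_pderiv_le _ _ _) (Nat.le_zero.mpr (h ▸ h1)))
    rw [deltaOp, pderiv_eq_zero_of_degreeOf_eq_zero _ _ this]
    simp

lemma main_aux (n : ℕ) (l : List ℕ) (p q : Fin l.length) (hlt : (p : ℕ) < (q : ℕ))
    (hclose : |(l.get p : ℤ) - (l.get q : ℤ)| ≤ 1) :
    l.foldr (fun i r => deltaOp i r) (Pmono R n) = 0 := by
  have hqlt : (q : ℕ) < l.length := q.isLt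
  have hplt : (p : ℕ) < l.length := p.isLt
  conv_lhs => rw [← List.take_append_drop ((p : ℕ)) l]
  rw [List.foldr_append, List.drop_eq_getElem_cons hplt, List.foldr_cons]
  have hlen : (q : ℕ) - ((p : ℕ) + 1) < (l.drop ((p : ℕ) + 1)).length := by
    rw [List.length_drop]; omega
  have hb : l[(q : ℕ)] ∈ l.drop ((p : ℕ) + 1) := by
    have hmem := List.getElem_mem hlen
    rw [List.getElem_drop] at hmem
    have h2 : ((p : ℕ) + 1) + ((q : ℕ) - ((p : ℕ) + 1)) = (q : ℕ) := by omega
    simp only [h2] at hmem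
    exact hmem
  obtain ⟨h0, h0'⟩ := (fold_invariant (R := R) n (l.drop ((p : ℕ) + 1))).2 _ hb
  have hclose' : (l[(p : ℕ)] : ℤ) - (l[(q : ℕ)] : ℤ) ≤ 1 ∧
      -(1 : ℤ) ≤ (l[(p : ℕ)] : ℤ) - (l[(q : ℕ)] : ℤ) := by
    rw [abs_le] at hclose
    simpa [List.get_eq_getElem] using hclose.symm
  have hij : l[(p : ℕ)] = l[(q : ℕ)] ∨ l[(p : ℕ)] = l[(q : ℕ)] + 1 ∨
      l[(p : ℕ)] + 1 = l[(q : ℕ)] := by omega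
  rw [deltaOp_close_zero l[(p : ℕ)] l[(q : ℕ)] _ h0 h0' hij, foldr_delta_zero]

end Aux

/-- Let `n ≥ 1` and let `i₁, …, i_ℓ` be a finite sequence of indices in `{1,…,n-1}`
(repetitions allowed).  If there exist positions `p ≠ q` with `|i_p − i_q| ≤ 1`
(in particular if two of the indices coincide, or are consecutive integers), then
`δ_{i₁}(δ_{i₂}(⋯ δ_{i_ℓ}(P_n) ⋯)) = 0`. -/
theorem delta_close_indices_vanish {R : Type*} [CommRing R] (n : ℕ) (hn : 1 ≤ n)
    (l : List ℕ) (hl : ∀ i ∈ l, i ∈ Finset.Icc 1 (n - 1))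
    (p q : Fin l.length) (hpq : p ≠ q)
    (hclose : |(l.get p : ℤ) - (l.get q : ℤ)| ≤ 1) :
    l.foldr (fun i r => deltaOp i r) (Pmono R n) = 0 := by
  have h1 : (p : ℕ) ≠ (q : ℕ) := fun h => hpq (Fin.ext h)
  rcases Nat.lt_or_gt_of_ne h1 with h | h
  · exact main_aux n l p q h hclose
  · exact main_aux n l q p h (by rwa [abs_sub_comm])
end

section
/- Let R be a commutative ℚ-algebra. For m ≥ 1 set d_m := δ_1 + ⋯ + δ_m and let E_m(q) := Σ_{ℓ ≥ 0} (1/ℓ!) d_m^ℓ(q) (a finite sum when q is one of the monomials P_k, since d_m acts nilpotently on them), with the convention E_m = identity for m ≤ 0. Then for every n ≥ 2: E_{n−1}(P_n) = a_n · E_{n−2}(P_{n−1}) + b_{n−1} · E_{n−3}(P_{n−2}). -/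
open MvPolynomial

/-- The operator `d_m = δ_1 + ⋯ + δ_m` (the zero operator for `m = 0`). -/
noncomputable def dm (R : Type*) [CommRing R] (m : ℕ)
    (p : MvPolynomial (ℕ ⊕ ℕ) R) : MvPolynomial (ℕ ⊕ ℕ) R :=
  ∑ i ∈ Finset.Icc 1 m, deltaOp i p

/-- The exponential `E_m (q) = ∑_{ℓ ≥ 0} (1/ℓ!) d_m^ℓ (q)`, a finite sum when `q` is one of
the monomials `P_k` since `d_m` acts nilpotently on them; `E_0` is the identity. -/
noncomputable def Eop (R : Type*) [CommRing R] [Algebra ℚ R] (m : ℕ)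
    (q : MvPolynomial (ℕ ⊕ ℕ) R) : MvPolynomial (ℕ ⊕ ℕ) R :=
  ∑ᶠ ℓ : ℕ, ((ℓ.factorial : ℚ)⁻¹) • (dm R m)^[ℓ] q

namespace EopAux

open Finset

section pderivGeneral

variable {R σ : Type*} [CommSemiring R]

theorem pderiv_comm' (i j : σ) (p : MvPolynomial σ R) :
    pderiv i (pderiv j p) = pderiv j (pderiv i p) := by
  classical
  induction p using MvPolynomial.induction_on with
  | C a => simp
  | add p q hp hq => simp [map_add, hp, hq]
  | mul_X p s hp =>
    have hXX : ∀ k l : σ, pderiv k (pderiv l (X s : MvPolynomial σ R)) = 0 := by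
      intro k l
      rcases eq_or_ne s l with h | h
      · subst h; rw [pderiv_X_self]; simp
      · rw [pderiv_X_of_ne h]; simp
    simp only [pderiv_mul, map_add, hXX, mul_zero, add_zero, hp]
    ring

theorem td_pderiv_le (i : σ) (p : MvPolynomial σ R) :
    (pderiv i p).totalDegree ≤ p.totalDegree - 1 := by
  classical
  conv_lhs => rw [p.as_sum, map_sum]
  refine (totalDegree_finset_sum _ _).trans (Finset.sup_le fun s hs => ?_)
  rw [pderiv_monomial]
  rcases Nat.eq_zero_or_pos (s i) with h | h
  · simp [h]
  · refine ((totalDegree_monomial_le _ _).trans_eq (by rw [Function.id_def])).trans ?_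
    have hle : Finsupp.single i 1 ≤ s := by rwa [Finsupp.single_le_iff]
    have hsum : ((s - Finsupp.single i 1) + Finsupp.single i 1).sum (fun _ e => e)
        = (s - Finsupp.single i 1).sum (fun _ e => e) + 1 := by
      rw [Finsupp.sum_add_index' (fun _ => rfl) (fun _ _ _ => rfl)]
      simp
    rw [tsub_add_cancel_of_le hle] at hsum
    have := le_totalDegree hs
    omega

theorem pderiv_eq_zero_of_td (i : σ) (p : MvPolynomial σ R) (h : p.totalDegree = 0) :
    pderiv i p = 0 := by
  classical
  rw [p.as_sum, map_sum]
  refine Finset.sum_eq_zero fun s hs => ?_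
  have h1 : s.sum (fun _ e => e) = 0 := le_antisymm (h ▸ le_totalDegree hs) (Nat.zero_le _)
  have h2 : s i = 0 := by
    by_contra hne
    have : s i ≤ s.sum fun _ e => e :=
      Finset.single_le_sum (f := fun j => s j) (fun _ _ => Nat.zero_le _)
        (Finsupp.mem_support_iff.2 hne)
    omega
  rw [pderiv_monomial, h2]
  simp

theorem td_X_le (v : σ) : (X v : MvPolynomial σ R).totalDegree ≤ 1 := by
  rw [X]
  refine (totalDegree_monomial_le _ _).trans ?_
  simp

end pderivGeneral

variable {R : Type*} [CommRing R]

/-- Multiplication by `X v` as a linear endomorphism. -/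
noncomputable def Mv (v : ℕ ⊕ ℕ) : Module.End R (MvPolynomial (ℕ ⊕ ℕ) R) :=
  LinearMap.mulLeft R (X v)

/-- `pderiv` as a linear endomorphism. -/
noncomputable def Pd (k : ℕ ⊕ ℕ) : Module.End R (MvPolynomial (ℕ ⊕ ℕ) R) :=
  (pderiv (R := R) (σ := ℕ ⊕ ℕ) k).toLinearMap

/-- `deltaOp` as a linear endomorphism. -/
noncomputable def dOp (i : ℕ) : Module.End R (MvPolynomial (ℕ ⊕ ℕ) R) :=
  Mv (Sum.inr i) * (Pd (Sum.inl (i + 1)) * Pd (Sum.inl i))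

/-- `dm` as a linear endomorphism. -/
noncomputable def DL (m : ℕ) : Module.End R (MvPolynomial (ℕ ⊕ ℕ) R) :=
  ∑ i ∈ Finset.Icc 1 m, dOp i

@[simp] theorem Mv_apply (v : ℕ ⊕ ℕ) (p : MvPolynomial (ℕ ⊕ ℕ) R) :
    Mv v p = X v * p := rfl

@[simp] theorem Pd_apply (k : ℕ ⊕ ℕ) (p : MvPolynomial (ℕ ⊕ ℕ) R) :
    Pd k p = pderiv k p := rfl

theorem dOp_apply (i : ℕ) (p : MvPolynomial (ℕ ⊕ ℕ) R) :
    dOp i p = deltaOp i p := rfl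

theorem DL_apply (m : ℕ) (p : MvPolynomial (ℕ ⊕ ℕ) R) :
    DL m p = dm R m p := by
  rw [DL, dm, LinearMap.sum_apply]
  exact Finset.sum_congr rfl fun i _ => dOp_apply i p

theorem DL_succ (m : ℕ) : (DL (m + 1) : Module.End R _) = DL m + dOp (m + 1) := by
  rw [DL, DL, Finset.sum_Icc_succ_top (Nat.le_add_left 1 m)]

theorem comm_Mv_Pd {v k : ℕ ⊕ ℕ} (h : v ≠ k) :
    Commute (Mv (R := R) v) (Pd k) := by
  refine LinearMap.ext fun p => ?_
  simp only [Module.End.mul_apply, Mv_apply, Pd_apply, pderiv_mul, pderiv_X_of_ne h, zero_mul,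
    zero_add]

theorem comm_Pd_Pd (k l : ℕ ⊕ ℕ) : Commute (Pd (R := R) k) (Pd l) :=
  LinearMap.ext fun p => by
    simp only [Module.End.mul_apply, Pd_apply]
    exact pderiv_comm' k l p

theorem comm_Mv_Mv (v w : ℕ ⊕ ℕ) : Commute (Mv (R := R) v) (Mv w) :=
  LinearMap.ext fun p => by simp [Module.End.mul_apply, mul_left_comm]

theorem comm_Mv_dOp {v : ℕ ⊕ ℕ} (i : ℕ) (h1 : v ≠ Sum.inl i) (h2 : v ≠ Sum.inl (i + 1)) :
    Commute (Mv (R := R) v) (dOp i) :=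
  (comm_Mv_Mv v _).mul_right ((comm_Mv_Pd h2).mul_right (comm_Mv_Pd h1))

theorem comm_dOp (i j : ℕ) : Commute (dOp (R := R) i) (dOp j) := by
  have hM : ∀ k : ℕ, Commute (Mv (R := R) (Sum.inr i)) (dOp k) :=
    fun k => comm_Mv_dOp k (by simp) (by simp)
  have hP : ∀ l k : ℕ, Commute (Pd (R := R) (Sum.inl l)) (dOp k) := fun l k =>
    ((comm_Mv_Pd (by simp)).symm).mul_right ((comm_Pd_Pd _ _).mul_right (comm_Pd_Pd _ _))
  exact (hM j).mul_left ((hP (i + 1) j).mul_left (hP i j))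

theorem comm_DL_dOp (m k : ℕ) : Commute (DL (R := R) m) (dOp k) :=
  Commute.sum_left _ _ _ fun i _ => comm_dOp i k

theorem comm_Mv_DL_inr (j m : ℕ) : Commute (Mv (R := R) (Sum.inr j)) (DL m) :=
  Commute.sum_right _ _ _ fun i _ => comm_Mv_dOp i (by simp) (by simp)

theorem comm_Mv_DL_inl {t m : ℕ} (h : m + 1 < t) :
    Commute (Mv (R := R) (Sum.inl t)) (DL m) :=
  Commute.sum_right _ _ _ fun i hi => by
    rw [Finset.mem_Icc] at hi
    exact comm_Mv_dOp i (by simp; omega) (by simp; omega)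

theorem td_dOp_le (i : ℕ) (p : MvPolynomial (ℕ ⊕ ℕ) R) :
    (dOp i p).totalDegree ≤ p.totalDegree - 1 := by
  have h2 : (pderiv (Sum.inl (i + 1)) (pderiv (Sum.inl i) p)).totalDegree
      ≤ p.totalDegree - 2 := by
    have := td_pderiv_le (Sum.inl (i + 1)) (pderiv (Sum.inl i) p)
    have := td_pderiv_le (Sum.inl i) p
    omega
  by_cases htd : p.totalDegree ≤ 1
  · have h0 : (pderiv (Sum.inl i) p).totalDegree = 0 := by
      have := td_pderiv_le (Sum.inl i) p; omega
    have : pderiv (Sum.inl (i + 1)) (pderiv (Sum.inl i) p) = 0 :=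
      pderiv_eq_zero_of_td _ _ h0
    rw [dOp_apply, deltaOp, this, mul_zero, totalDegree_zero]
    omega
  · rw [dOp_apply, deltaOp]
    refine (totalDegree_mul _ _).trans ?_
    have := td_X_le (R := R) (Sum.inr i : ℕ ⊕ ℕ)
    omega

theorem td_DL_le (m : ℕ) (p : MvPolynomial (ℕ ⊕ ℕ) R) :
    (DL m p).totalDegree ≤ p.totalDegree - 1 := by
  rw [DL, LinearMap.sum_apply]
  exact (totalDegree_finset_sum _ _).trans (Finset.sup_le fun i _ => td_dOp_le i p)

theorem DL_zero_of_td (m : ℕ) (p : MvPolynomial (ℕ ⊕ ℕ) R) (h : p.totalDegree = 0) :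
    DL m p = 0 := by
  rw [DL, LinearMap.sum_apply]
  refine Finset.sum_eq_zero fun i _ => ?_
  rw [dOp_apply, deltaOp, pderiv_eq_zero_of_td _ _ h, map_zero, mul_zero]

theorem DL_pow_zero (m : ℕ) : ∀ ℓ (p : MvPolynomial (ℕ ⊕ ℕ) R),
    p.totalDegree < ℓ → (DL m ^ ℓ) p = 0 := by
  intro ℓ
  induction ℓ with
  | zero => intro p h; omega
  | succ ℓ ih =>
    intro p h
    rw [pow_succ, Module.End.mul_apply]
    rcases Nat.eq_zero_or_pos p.totalDegree with h0 | h0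
    · rw [DL_zero_of_td m p h0, map_zero]
    · exact ih _ (by have := td_DL_le m p; omega)

theorem Pmono_succ (k : ℕ) : Pmono R (k + 1) = X (Sum.inl (k + 1)) * Pmono R k := by
  rw [Pmono, Pmono, Finset.prod_Icc_succ_top (Nat.le_add_left 1 k), mul_comm]

theorem pderiv_Pmono_of_lt {t k : ℕ} (h : k < t) :
    pderiv (Sum.inl t) (Pmono R k) = 0 := by
  induction k with
  | zero =>
    rw [Pmono]
    simp
  | succ k ih =>
    rw [Pmono_succ, pderiv_mul, pderiv_X_of_ne (by simp; omega), ih (by omega), mul_zero,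
      zero_mul, add_zero]

theorem pderiv_Pmono_succ (k : ℕ) :
    pderiv (Sum.inl (k + 1)) (Pmono R (k + 1)) = Pmono R k := by
  rw [Pmono_succ, pderiv_mul, pderiv_X_self, one_mul,
    pderiv_Pmono_of_lt (Nat.lt_succ_self k), mul_zero, add_zero]

theorem td_Pmono_le (k : ℕ) : (Pmono R k).totalDegree ≤ k := by
  rw [Pmono]
  refine (totalDegree_finset_prod _ _).trans ?_
  calc ∑ i ∈ Finset.Icc 1 k, (X (Sum.inl i) : MvPolynomial (ℕ ⊕ ℕ) R).totalDegree
      ≤ ∑ _i ∈ Finset.Icc 1 k, 1 := Finset.sum_le_sum fun i _ => td_X_le _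
    _ = k := by simp

theorem dOp_Pmono (k : ℕ) :
    dOp (R := R) (k + 1) (Pmono R (k + 2)) = X (Sum.inr (k + 1)) * Pmono R k := by
  have h1 : pderiv (Sum.inl (k + 1)) (Pmono R (k + 2))
      = X (Sum.inl (k + 2)) * Pmono R k := by
    rw [show k + 2 = (k + 1) + 1 from rfl, Pmono_succ (k + 1), pderiv_mul,
      pderiv_X_of_ne (by simp), pderiv_Pmono_succ, zero_mul, zero_add]
  rw [dOp_apply, deltaOp, h1, pderiv_mul, pderiv_X_self, one_mul,
    pderiv_Pmono_of_lt (by omega), mul_zero, add_zero]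

theorem dOp_b_Pmono (k : ℕ) :
    dOp (R := R) (k + 1) (X (Sum.inr (k + 1)) * Pmono R k) = 0 := by
  rw [dOp_apply, deltaOp, pderiv_mul, pderiv_X_of_ne (by simp),
    pderiv_Pmono_of_lt (by omega), zero_mul, mul_zero, add_zero, map_zero, mul_zero]

theorem dOp_Pmono_self (k : ℕ) : dOp (R := R) (k + 1) (Pmono R (k + 1)) = 0 := by
  rw [dOp_apply, deltaOp, pderiv_Pmono_succ, pderiv_Pmono_of_lt (by omega), mul_zero]

theorem commute_apply {f g : Module.End R (MvPolynomial (ℕ ⊕ ℕ) R)} (h : Commute f g)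
    (p : MvPolynomial (ℕ ⊕ ℕ) R) : f (g p) = g (f p) := by
  have := LinearMap.ext_iff.1 h p
  simpa [Module.End.mul_apply] using this

theorem keyA (k : ℕ) : ∀ ℓ : ℕ,
    (DL (R := R) (k + 1) ^ ℓ) (Pmono R (k + 2))
      = (DL k ^ ℓ) (Pmono R (k + 2))
        + ℓ • (DL k ^ (ℓ - 1)) (X (Sum.inr (k + 1)) * Pmono R k) := by
  have main : ∀ ℓ : ℕ,
      (DL (R := R) (k + 1) ^ (ℓ + 1)) (Pmono R (k + 2))
        = (DL k ^ (ℓ + 1)) (Pmono R (k + 2))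
          + (ℓ + 1) • (DL k ^ ℓ) (X (Sum.inr (k + 1)) * Pmono R k) := by
    intro ℓ
    induction ℓ with
    | zero =>
      simp only [zero_add, pow_one, pow_zero, Module.End.one_apply, one_smul]
      rw [DL_succ, LinearMap.add_apply, dOp_Pmono]
    | succ ℓ ih =>
      rw [pow_succ' (DL (k + 1)) (ℓ + 1), Module.End.mul_apply, ih, DL_succ,
        LinearMap.add_apply]
      have e1 : (DL (R := R) k) ((DL k ^ (ℓ + 1)) (Pmono R (k + 2)))
          = (DL k ^ (ℓ + 2)) (Pmono R (k + 2)) := by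
        rw [pow_succ' (DL k) (ℓ + 1), Module.End.mul_apply]
      have e2 : (dOp (R := R) (k + 1)) ((DL k ^ (ℓ + 1)) (Pmono R (k + 2)))
          = (DL k ^ (ℓ + 1)) (X (Sum.inr (k + 1)) * Pmono R k) := by
        rw [commute_apply ((comm_DL_dOp k (k + 1)).pow_left (ℓ + 1)).symm, dOp_Pmono]
      have e3 : (dOp (R := R) (k + 1)) ((DL k ^ ℓ) (X (Sum.inr (k + 1)) * Pmono R k))
          = 0 := by
        rw [commute_apply ((comm_DL_dOp k (k + 1)).pow_left ℓ).symm, dOp_b_Pmono, map_zero]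
      have e4 : (DL (R := R) k) ((DL k ^ ℓ) (X (Sum.inr (k + 1)) * Pmono R k))
          = (DL k ^ (ℓ + 1)) (X (Sum.inr (k + 1)) * Pmono R k) := by
        rw [pow_succ' (DL k) ℓ, Module.End.mul_apply]
      rw [map_add, map_add, map_nsmul, map_nsmul, e1, e2, e3, e4, smul_zero, add_zero,
        succ_nsmul ((DL k ^ (ℓ + 1)) (X (Sum.inr (k + 1)) * Pmono R k)) (ℓ + 1)]
      abel
  intro ℓ
  cases ℓ with
  | zero => simp
  | succ ℓ => simpa using main ℓ

theorem keyB (k : ℕ) : ∀ ℓ : ℕ,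
    (DL (R := R) (k + 1) ^ ℓ) (Pmono R (k + 1)) = (DL k ^ ℓ) (Pmono R (k + 1)) := by
  intro ℓ
  induction ℓ with
  | zero => rfl
  | succ ℓ ih =>
    rw [pow_succ' (DL (k + 1)) ℓ, Module.End.mul_apply, ih, DL_succ, LinearMap.add_apply,
      pow_succ' (DL k) ℓ, Module.End.mul_apply]
    have e3 : (dOp (R := R) (k + 1)) ((DL k ^ ℓ) (Pmono R (k + 1))) = 0 := by
      rw [commute_apply ((comm_DL_dOp k (k + 1)).pow_left ℓ).symm, dOp_Pmono_self, map_zero]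
    rw [e3, add_zero]

theorem DL_pow_mulX {v : ℕ ⊕ ℕ} {m : ℕ}
    (h : Commute (Mv (R := R) v) (DL m)) (ℓ : ℕ) (q : MvPolynomial (ℕ ⊕ ℕ) R) :
    (DL m ^ ℓ) (X v * q) = X v * (DL m ^ ℓ) q := by
  have := commute_apply (h.pow_right ℓ).symm q
  simpa using this

variable [Algebra ℚ R]

theorem iterate_dm (m ℓ : ℕ) (q : MvPolynomial (ℕ ⊕ ℕ) R) :
    (dm R m)^[ℓ] q = (DL m ^ ℓ) q := by
  have h : dm R m = ⇑(DL (R := R) m) := funext fun p => (DL_apply m p).symm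
  rw [h, Module.End.pow_apply]

theorem Eop_eq_sum (m N : ℕ) (q : MvPolynomial (ℕ ⊕ ℕ) R) (h : q.totalDegree < N) :
    Eop R m q = ∑ ℓ ∈ Finset.range N, ((ℓ.factorial : ℚ)⁻¹) • (DL m ^ ℓ) q := by
  rw [Eop]
  have hfun : (fun ℓ : ℕ => ((ℓ.factorial : ℚ)⁻¹) • (dm R m)^[ℓ] q)
      = fun ℓ : ℕ => ((ℓ.factorial : ℚ)⁻¹) • (DL m ^ ℓ) q := by
    funext ℓ; rw [iterate_dm]
  rw [hfun]
  refine finsum_eq_sum_of_support_subset _ ?_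
  intro ℓ hℓ
  simp only [Function.mem_support, ne_eq] at hℓ
  simp only [Finset.coe_range, Set.mem_Iio]
  by_contra hge
  exact hℓ (by rw [DL_pow_zero m ℓ q (by omega), smul_zero])

theorem Eop_P_drop (k : ℕ) : Eop R k (Pmono R k) = Eop R (k - 1) (Pmono R k) := by
  cases k with
  | zero => rfl
  | succ k =>
    rw [Eop, Eop]
    refine finsum_congr fun ℓ => ?_
    rw [iterate_dm, iterate_dm, Nat.add_sub_cancel, keyB]

end EopAux

open EopAux Finset

/-- For every `n ≥ 2`:
`E_{n-1}(P_n) = a_n · E_{n-2}(P_{n-1}) + b_{n-1} · E_{n-3}(P_{n-2})`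
(with natural subtraction, so that `E_m` is the identity for `m ≤ 0`). -/
theorem Eop_recurrence {R : Type*} [CommRing R] [Algebra ℚ R] (n : ℕ) (hn : 2 ≤ n) :
    Eop R (n - 1) (Pmono R n) =
      X (Sum.inl n) * Eop R (n - 2) (Pmono R (n - 1)) +
        X (Sum.inr (n - 1)) * Eop R (n - 3) (Pmono R (n - 2)) := by
  obtain ⟨k, rfl⟩ : ∃ k, n = k + 2 := ⟨n - 2, by omega⟩
  have e1 : k + 2 - 1 = k + 1 := by omega
  have e2 : k + 2 - 2 = k := by omega
  have e3 : k + 2 - 3 = k - 1 := by omega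
  rw [e1, e2, e3]
  set N := k + 3 with hN
  have htd2 : (Pmono R (k + 2)).totalDegree < N := by
    have := td_Pmono_le (R := R) (k + 2); omega
  have htd1 : (Pmono R (k + 1)).totalDegree < N := by
    have := td_Pmono_le (R := R) (k + 1); omega
  have hb : (X (Sum.inr (k + 1)) * Pmono R k : MvPolynomial (ℕ ⊕ ℕ) R).totalDegree
      < k + 2 := by
    have h1 := totalDegree_mul (X (Sum.inr (k + 1)) : MvPolynomial (ℕ ⊕ ℕ) R) (Pmono R k)
    have h2 := td_X_le (R := R) (Sum.inr (k + 1) : ℕ ⊕ ℕ)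
    have h3 := td_Pmono_le (R := R) k
    omega
  have hbN : (X (Sum.inr (k + 1)) * Pmono R k : MvPolynomial (ℕ ⊕ ℕ) R).totalDegree < N := by
    omega
  -- Expand the left-hand side
  rw [Eop_eq_sum (k + 1) N _ htd2]
  have step1 : ∀ ℓ ∈ Finset.range N,
      ((ℓ.factorial : ℚ)⁻¹) • (DL (R := R) (k + 1) ^ ℓ) (Pmono R (k + 2))
        = ((ℓ.factorial : ℚ)⁻¹) • (DL k ^ ℓ) (Pmono R (k + 2))
          + ((ℓ.factorial : ℚ)⁻¹) •
              (ℓ • (DL k ^ (ℓ - 1)) (X (Sum.inr (k + 1)) * Pmono R k)) := by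
    intro ℓ _
    rw [keyA, smul_add]
  rw [Finset.sum_congr rfl step1, Finset.sum_add_distrib]
  -- First sum
  have hcomm1 : Commute (Mv (R := R) (Sum.inl (k + 2))) (DL k) :=
    comm_Mv_DL_inl (by omega)
  have S1 : (∑ ℓ ∈ Finset.range N,
      ((ℓ.factorial : ℚ)⁻¹) • (DL (R := R) k ^ ℓ) (Pmono R (k + 2)))
      = X (Sum.inl (k + 2)) * Eop R k (Pmono R (k + 1)) := by
    rw [Eop_eq_sum k N _ htd1, Finset.mul_sum]
    refine Finset.sum_congr rfl fun ℓ _ => ?_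
    rw [show Pmono R (k + 2) = X (Sum.inl (k + 2)) * Pmono R (k + 1) from Pmono_succ (k + 1),
      DL_pow_mulX hcomm1, mul_smul_comm]
  -- Second sum
  have hcomm2 : Commute (Mv (R := R) (Sum.inr (k + 1))) (DL k) := comm_Mv_DL_inr _ _
  have S2 : (∑ ℓ ∈ Finset.range N,
      ((ℓ.factorial : ℚ)⁻¹) •
        (ℓ • (DL (R := R) k ^ (ℓ - 1)) (X (Sum.inr (k + 1)) * Pmono R k)))
      = X (Sum.inr (k + 1)) * Eop R (k - 1) (Pmono R k) := by
    rw [hN, Finset.sum_range_succ']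
    have hzero : ((Nat.factorial 0 : ℚ)⁻¹) •
        ((0 : ℕ) • (DL (R := R) k ^ (0 - 1)) (X (Sum.inr (k + 1)) * Pmono R k)) = 0 := by
      simp
    rw [hzero, add_zero]
    have hterm : ∀ j : ℕ,
        (((j + 1).factorial : ℚ)⁻¹) •
          ((j + 1) • (DL (R := R) k ^ (j + 1 - 1)) (X (Sum.inr (k + 1)) * Pmono R k))
        = ((j.factorial : ℚ)⁻¹) • (DL k ^ j) (X (Sum.inr (k + 1)) * Pmono R k) := by
      intro j
      rw [Nat.add_sub_cancel, ← Nat.cast_smul_eq_nsmul ℚ, smul_smul]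
      congr 1
      have h1 : ((j.factorial : ℚ)) ≠ 0 := Nat.cast_ne_zero.2 (Nat.factorial_ne_zero j)
      have h2 : ((j : ℚ) + 1) ≠ 0 := by positivity
      rw [Nat.factorial_succ]
      push_cast
      field_simp
    rw [Finset.sum_congr rfl fun j _ => hterm j]
    have hlast : ((((k + 2)).factorial : ℚ)⁻¹) •
        (DL (R := R) k ^ (k + 2)) (X (Sum.inr (k + 1)) * Pmono R k) = 0 := by
      rw [DL_pow_zero k (k + 2) _ hb, smul_zero]
    have hsplit : (∑ j ∈ Finset.range N,
        ((j.factorial : ℚ)⁻¹) • (DL (R := R) k ^ j) (X (Sum.inr (k + 1)) * Pmono R k))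
        = ∑ j ∈ Finset.range (k + 2),
          ((j.factorial : ℚ)⁻¹) • (DL (R := R) k ^ j) (X (Sum.inr (k + 1)) * Pmono R k) := by
      rw [show N = k + 2 + 1 from rfl, Finset.sum_range_succ, hlast, add_zero]
    rw [← hsplit, ← Eop_eq_sum k N _ hbN]
    have hEb : Eop R k (X (Sum.inr (k + 1)) * Pmono R k)
        = X (Sum.inr (k + 1)) * Eop R k (Pmono R k) := by
      have hPk : (Pmono R k).totalDegree < N := by have := td_Pmono_le (R := R) k; omega
      rw [Eop_eq_sum k N _ hbN, Eop_eq_sum k N _ hPk, Finset.mul_sum]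
      refine Finset.sum_congr rfl fun ℓ _ => ?_
      rw [DL_pow_mulX hcomm2, mul_smul_comm]
    rw [hEb, Eop_P_drop]
  rw [S1, S2]
end

section
/- Let r ≤ m and let h : (Fin m → α) → Y be invariant under every permutation of Fin m that permutes the first m−r coordinates among themselves and fixes the last r coordinates, and also under every permutation that permutes the last r coordinates among themselves and fixes the first m−r coordinates. Then for every k : Fin m → α, (P_sym h)(k₁,…,k_m) = ((m−r)! · r! / m!) · Σ_{1 ≤ i₁ < i₂ < ⋯ < i_r ≤ m} h(k_{j₁},…,k_{j_{m−r}}, k_{i₁},…,k_{i_r}), where j₁ < ⋯ < j_{m−r} is the increasing enumeration of {1,…,m} \ {i₁,…,i_r}. -/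
/-- Full symmetrization: `(P_sym f)(k) = (1/m!) ∑_{ρ ∈ Perm(Fin m)} f (k ∘ ρ)`. -/
noncomputable def Psym {α Y : Type*} [AddCommGroup Y] [Module ℚ Y] (m : ℕ)
    (f : (Fin m → α) → Y) : (Fin m → α) → Y :=
  fun k => ((m.factorial : ℚ)⁻¹) • ∑ ρ : Equiv.Perm (Fin m), f (k ∘ ρ)

/-- Given an `r`-element subset `T = {i₁ < ⋯ < i_r}` of `Fin m`, the rearrangement map
sending the position `l` to the `(l+1)`-st element `j_{l+1}` of the increasing enumeration
of the complement of `T` if `l < m - r`, and to the element `i_{l-(m-r)+1}` of the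
increasing enumeration of `T` otherwise. -/
def arrange {m r : ℕ} (hr : r ≤ m) (T : Finset (Fin m)) (hT : T.card = r) :
    Fin m → Fin m := fun l =>
  if hl : (l : ℕ) < m - r then
    ((Tᶜ.orderIsoOfFin (by rw [Finset.card_compl, hT, Fintype.card_fin]))
      ⟨(l : ℕ), hl⟩ : Fin m)
  else
    ((T.orderIsoOfFin hT) ⟨(l : ℕ) - (m - r), by have := l.isLt; omega⟩ : Fin m)

lemma arrange_mem_compl {m r : ℕ} (hr : r ≤ m) (T : Finset (Fin m)) (hT : T.card = r)
    (l : Fin m) (hl : (l : ℕ) < m - r) : arrange hr T hT l ∈ Tᶜ := by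
  rw [arrange, dif_pos hl]; exact Finset.coe_mem _

lemma arrange_mem {m r : ℕ} (hr : r ≤ m) (T : Finset (Fin m)) (hT : T.card = r)
    (l : Fin m) (hl : ¬ (l : ℕ) < m - r) : arrange hr T hT l ∈ T := by
  rw [arrange, dif_neg hl]; exact Finset.coe_mem _

lemma arrange_injective {m r : ℕ} (hr : r ≤ m) (T : Finset (Fin m)) (hT : T.card = r) :
    Function.Injective (arrange hr T hT) := by
  intro a b hab
  by_cases ha : (a : ℕ) < m - r <;> by_cases hb : (b : ℕ) < m - r
  · rw [arrange, dif_pos ha, arrange, dif_pos hb] at hab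
    have h1 := (Tᶜ.orderIsoOfFin _).injective (Subtype.coe_injective hab)
    exact Fin.ext (by simpa using congrArg Fin.val h1)
  · exfalso
    have h1 := arrange_mem_compl hr T hT a ha
    have h2 := arrange_mem hr T hT b hb
    rw [hab] at h1
    exact (Finset.mem_compl.mp h1) h2
  · exfalso
    have h1 := arrange_mem_compl hr T hT b hb
    have h2 := arrange_mem hr T hT a ha
    rw [← hab] at h1
    exact (Finset.mem_compl.mp h1) h2
  · rw [arrange, dif_neg ha, arrange, dif_neg hb] at hab
    have h1 := (T.orderIsoOfFin hT).injective (Subtype.coe_injective hab)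
    have h2 : (a : ℕ) - (m - r) = (b : ℕ) - (m - r) := by
      simpa using congrArg Fin.val h1
    exact Fin.ext (by omega)

noncomputable def arrangeEquiv {m r : ℕ} (hr : r ≤ m) (T : Finset (Fin m))
    (hT : T.card = r) : Equiv.Perm (Fin m) :=
  Equiv.ofBijective (arrange hr T hT)
    (Finite.injective_iff_bijective.mp (arrange_injective hr T hT))

@[simp] lemma arrangeEquiv_apply {m r : ℕ} (hr : r ≤ m) (T : Finset (Fin m))
    (hT : T.card = r) (l : Fin m) : arrangeEquiv hr T hT l = arrange hr T hT l := rfl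

/-- If `h` is invariant under every permutation of `Fin m` fixing the last `r` coordinates
(hence permuting the first `m - r` among themselves), and under every permutation fixing
the first `m - r` coordinates, then for every `k`:
`(P_sym h)(k) = ((m-r)!·r!/m!) ∑_{T ⊆ Fin m, |T| = r} h(k_{j₁},…,k_{j_{m-r}},k_{i₁},…,k_{i_r})`,
where `i₁ < ⋯ < i_r` enumerates `T` and `j₁ < ⋯ < j_{m-r}` enumerates its complement. -/
theorem psym_as_sum_over_subsets {α Y : Type*} [AddCommGroup Y] [Module ℚ Y]
    (m r : ℕ) (hr : r ≤ m) (h : (Fin m → α) → Y)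
    (hinv1 : ∀ π : Equiv.Perm (Fin m), (∀ l : Fin m, m - r ≤ (l : ℕ) → π l = l) →
      ∀ k : Fin m → α, h (k ∘ π) = h k)
    (hinv2 : ∀ π : Equiv.Perm (Fin m), (∀ l : Fin m, (l : ℕ) < m - r → π l = l) →
      ∀ k : Fin m → α, h (k ∘ π) = h k)
    (k : Fin m → α) :
    Psym m h k = (((m - r).factorial * r.factorial : ℚ) / m.factorial) •
      ∑ T : {T : Finset (Fin m) // T.card = r}, h (k ∘ arrange hr T.1 T.2) := by
  classical
  set p : Fin m → Prop := fun l => (l : ℕ) < m - r with hp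
  have eP : {l : Fin m // p l} ≃ Fin (m - r) :=
    { toFun := fun l => ⟨(l : Fin m), l.2⟩
      invFun := fun i => ⟨⟨(i : ℕ), lt_of_lt_of_le i.2 (Nat.sub_le m r)⟩, i.2⟩
      left_inv := fun l => by ext; rfl
      right_inv := fun i => rfl }
  have eN : {l : Fin m // ¬ p l} ≃ Fin r :=
    { toFun := fun l => ⟨(l : Fin m) - (m - r), by
        have h1 := (l : Fin m).isLt; have h2 := l.2
        simp only [hp, not_lt] at h2; omega⟩
      invFun := fun i => ⟨⟨(i : ℕ) + (m - r), by have := i.isLt; omega⟩, by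
        simp [hp]⟩
      left_inv := fun l => by
        have h2 := l.2; simp only [hp, not_lt] at h2
        ext; simp; omega
      right_inv := fun i => by ext; simp }
  set F : ({T : Finset (Fin m) // T.card = r} ×
      (Equiv.Perm {l : Fin m // p l} × Equiv.Perm {l : Fin m // ¬ p l})) →
      Equiv.Perm (Fin m) :=
    fun x => arrangeEquiv hr x.1.1 x.1.2 * Equiv.Perm.subtypeCongr x.2.1 x.2.2 with hF
  have congr_mem : ∀ (σ₁ : Equiv.Perm {l : Fin m // p l})
      (σ₂ : Equiv.Perm {l : Fin m // ¬ p l}) (l : Fin m),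
      (p l → p (Equiv.Perm.subtypeCongr σ₁ σ₂ l)) ∧
      (¬ p l → ¬ p (Equiv.Perm.subtypeCongr σ₁ σ₂ l)) := by
    intro σ₁ σ₂ l
    constructor
    · intro hl
      rw [Equiv.Perm.subtypeCongr.left_apply σ₁ σ₂ hl]
      exact (σ₁ ⟨l, hl⟩).2
    · intro hl
      rw [Equiv.Perm.subtypeCongr.right_apply σ₁ σ₂ hl]
      exact (σ₂ ⟨l, hl⟩).2
  have recover : ∀ x, x.1.1 = Finset.image (F x) (Finset.univ.filter fun l => ¬ p l) := by
    intro ⟨⟨T, hT⟩, σ₁, σ₂⟩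
    symm
    apply Finset.eq_of_subset_of_card_le
    · intro y hy
      simp only [Finset.mem_image, Finset.mem_filter, Finset.mem_univ, true_and] at hy
      obtain ⟨l, hl, rfl⟩ := hy
      have hm := (congr_mem σ₁ σ₂ l).2 hl
      simp only [hF, Equiv.Perm.mul_apply]
      exact arrange_mem hr T hT _ hm
    · rw [Finset.card_image_of_injective _ (F _).injective]
      have h1 : (Finset.univ.filter fun l : Fin m => ¬ p l).card = r := by
        have := Fintype.card_congr eN
        rwa [Fintype.card_subtype, Fintype.card_fin] at this
      show T.card ≤ (Finset.univ.filter fun l : Fin m => ¬ p l).card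
      rw [h1, hT]
  have Finj : Function.Injective F := by
    intro x y hxy
    have hTeq : x.1 = y.1 := by
      have := recover x
      rw [hxy, ← recover y] at this
      exact Subtype.ext this
    obtain ⟨⟨T, hT'⟩, σ₁, σ₂⟩ := x
    obtain ⟨⟨T2, hT2⟩, τ₁, τ₂⟩ := y
    simp only [Subtype.mk.injEq] at hTeq
    subst hTeq
    simp only [hF] at hxy
    have hc : Equiv.Perm.subtypeCongr σ₁ σ₂ = Equiv.Perm.subtypeCongr τ₁ τ₂ :=
      mul_left_cancel hxy
    refine Prod.ext (Subtype.ext rfl) (Prod.ext ?_ ?_)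
    · apply Equiv.ext; rintro ⟨lv, hlp⟩
      apply Subtype.ext
      have hcl := congrArg (fun (e : Equiv.Perm (Fin m)) => e lv) hc
      rw [Equiv.Perm.subtypeCongr.left_apply σ₁ σ₂ hlp,
        Equiv.Perm.subtypeCongr.left_apply τ₁ τ₂ hlp] at hcl
      exact hcl
    · apply Equiv.ext; rintro ⟨lv, hlp⟩
      apply Subtype.ext
      have hcl := congrArg (fun (e : Equiv.Perm (Fin m)) => e lv) hc
      rw [Equiv.Perm.subtypeCongr.right_apply σ₁ σ₂ hlp,
        Equiv.Perm.subtypeCongr.right_apply τ₁ τ₂ hlp] at hcl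
      exact hcl
  have Fbij : Function.Bijective F := by
    rw [Fintype.bijective_iff_injective_and_card]
    refine ⟨Finj, ?_⟩
    rw [Fintype.card_prod, Fintype.card_prod, Fintype.card_perm, Fintype.card_perm,
      Fintype.card_congr eP, Fintype.card_congr eN, Fintype.card_fin, Fintype.card_fin,
      Fintype.card_finset_len, Fintype.card_fin, Fintype.card_perm, Fintype.card_fin]
    rw [← Nat.choose_mul_factorial_mul_factorial hr]
    ring
  have key : ∀ x, h (k ∘ (F x)) = h (k ∘ arrange hr x.1.1 x.1.2) := by
    rintro ⟨⟨T, hT⟩, σ₁, σ₂⟩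
    have hsplit : Equiv.Perm.subtypeCongr σ₁ σ₂ =
        Equiv.Perm.subtypeCongr σ₁ (Equiv.refl _) *
        Equiv.Perm.subtypeCongr (Equiv.refl _) σ₂ := by
      ext l
      simp only [Equiv.Perm.mul_apply, Equiv.Perm.subtypeCongr.apply]
      by_cases hl : p l
      · simp [hl]
      · simp [hl, (σ₂ ⟨l, hl⟩).2]
    have comp1 : k ∘ (F (⟨⟨T, hT⟩, σ₁, σ₂⟩ : _)) =
        ((k ∘ arrange hr T hT) ∘ (Equiv.Perm.subtypeCongr σ₁ (Equiv.refl _)))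
          ∘ (Equiv.Perm.subtypeCongr (Equiv.refl _) σ₂) := by
      funext l
      have hl := congrArg (fun (e : Equiv.Perm (Fin m)) => e l) hsplit
      simp only [Equiv.Perm.mul_apply] at hl
      simp only [hF, Function.comp_apply, Equiv.Perm.mul_apply, arrangeEquiv_apply, hl]
    rw [comp1]
    rw [hinv2 _ (fun l hl => by
      exact Equiv.Perm.subtypeCongr.left_apply (Equiv.refl _) σ₂ (a := l) hl) _]
    rw [hinv1 _ (fun l hl => by
      exact Equiv.Perm.subtypeCongr.right_apply σ₁ (Equiv.refl _) (a := l)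
        (not_lt.mpr hl)) _]
  rw [Psym]
  rw [← Function.Bijective.sum_comp Fbij (fun ρ => h (k ∘ ρ))]
  simp only [key]
  rw [Fintype.sum_prod_type]
  have hconst : ∀ T : {T : Finset (Fin m) // T.card = r},
      ∑ _σ : Equiv.Perm {l : Fin m // p l} × Equiv.Perm {l : Fin m // ¬ p l},
        h (k ∘ arrange hr T.1 T.2)
        = ((m - r).factorial * r.factorial : ℕ) • h (k ∘ arrange hr T.1 T.2) := by
    intro T
    rw [Finset.sum_const, Finset.card_univ, Fintype.card_prod, Fintype.card_perm,
      Fintype.card_perm, Fintype.card_congr eP, Fintype.card_congr eN,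
      Fintype.card_fin, Fintype.card_fin]
  simp only [hconst]
  rw [← Finset.smul_sum, ← Nat.cast_smul_eq_nsmul ℚ, smul_smul]
  congr 1
  have hm : (m.factorial : ℚ) ≠ 0 := Nat.cast_ne_zero.mpr m.factorial_ne_zero
  field_simp
  exact Nat.cast_mul _ _
end

section
/- For every n ∈ ℕ and every a : Fin n → ℝ with a_i > 0 for all i, the following identity holds: Σ_{π ∈ Perm(Fin n)} ∏_{m=1}^{n} (a_{π(1)} + a_{π(2)} + ⋯ + a_{π(m)})^{−1} = ∏_{m=1}^{n} a_m^{−1}. -/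
open Finset

lemma Ici_succ_eq_map {n : ℕ} (m : Fin n) :
    Finset.Ici m.succ = (Finset.Ici m).map (Fin.succEmb n) := by
  ext j
  cases j using Fin.cases with
  | zero => simp [Fin.succ_ne_zero, (Fin.succ_pos m).not_ge, eq_comm]
  | succ i => simp [Fin.succ_le_succ_iff, Fin.succ_inj]

lemma froehlich_aux (n : ℕ) (a : Fin n → ℝ) (ha : ∀ i, 0 < a i) :
    ∑ π : Equiv.Perm (Fin n), ∏ m : Fin n, (∑ j ∈ Finset.Ici m, a (π j))⁻¹ =
      ∏ m : Fin n, (a m)⁻¹ := by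
  induction n with
  | zero => simp
  | succ n ih =>
    have hS : (∑ j, a j) ≠ 0 :=
      (Finset.sum_pos (fun i _ => ha i) ⟨0, Finset.mem_univ 0⟩).ne'
    rw [← Equiv.Perm.decomposeFin.symm.sum_comp
        (fun π => ∏ m : Fin (n+1), (∑ j ∈ Finset.Ici m, a (π j))⁻¹)]
    rw [Fintype.sum_prod_type]
    have key : ∀ p : Fin (n+1), ∀ e : Equiv.Perm (Fin n),
        (∏ m : Fin (n+1), (∑ j ∈ Finset.Ici m,
            a (Equiv.Perm.decomposeFin.symm (p, e) j))⁻¹)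
        = (∑ j, a j)⁻¹ *
          ∏ m : Fin n, (∑ j ∈ Finset.Ici m, a (Equiv.swap 0 p (e j).succ))⁻¹ := by
      intro p e
      rw [Fin.prod_univ_succ]
      congr 1
      · congr 1
        rw [show (Finset.Ici (0 : Fin (n+1))) = Finset.univ by
          ext j; simp [Fin.zero_le]]
        exact Equiv.sum_comp _ a
      · refine Finset.prod_congr rfl fun m _ => ?_
        rw [Ici_succ_eq_map, Finset.sum_map]
        simp [Equiv.Perm.decomposeFin_symm_apply_succ]
    calc ∑ p : Fin (n+1), ∑ e : Equiv.Perm (Fin n),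
          ∏ m : Fin (n+1), (∑ j ∈ Finset.Ici m,
            a (Equiv.Perm.decomposeFin.symm (p, e) j))⁻¹
        = ∑ p : Fin (n+1), (∑ j, a j)⁻¹ * (a p * ∏ m, (a m)⁻¹) := by
          refine Finset.sum_congr rfl fun p _ => ?_
          rw [Finset.sum_congr rfl fun e _ => key p e, ← Finset.mul_sum]
          congr 1
          rw [ih (fun j => a (Equiv.swap 0 p j.succ)) (fun j => ha _)]
          have h2 : ∏ i : Fin (n+1), (a (Equiv.swap 0 p i))⁻¹ = ∏ m, (a m)⁻¹ :=
            Equiv.prod_comp (Equiv.swap 0 p) (fun i => (a i)⁻¹)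
          rw [Fin.prod_univ_succ] at h2
          simp only [Equiv.swap_apply_left] at h2
          rw [← h2, mul_inv_cancel_left₀ (ha p).ne']
      _ = ∏ m, (a m)⁻¹ := by
          rw [← Finset.mul_sum, ← Finset.sum_mul, inv_mul_cancel_left₀ hS]


/-- Fröhlich's combinatorial identity: for positive reals `a₁, …, a_n`,
`∑_{π ∈ Perm(Fin n)} ∏_{m=1}^{n} (a_{π(1)} + ⋯ + a_{π(m)})⁻¹ = ∏_{m=1}^{n} a_m⁻¹`. -/
theorem froehlich_identity (n : ℕ) (a : Fin n → ℝ) (ha : ∀ i, 0 < a i) :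
    ∑ π : Equiv.Perm (Fin n), ∏ m : Fin n, (∑ j ∈ Finset.Iic m, a (π j))⁻¹ =
      ∏ m : Fin n, (a m)⁻¹ := by
  rw [← froehlich_aux n a ha,
    ← Equiv.sum_comp (Equiv.mulRight Fin.revPerm)
      (fun π => ∏ m : Fin n, (∑ j ∈ Finset.Iic m, a (π j))⁻¹)]
  refine Finset.sum_congr rfl fun π _ => ?_
  rw [← Equiv.prod_comp Fin.revPerm (fun m => (∑ j ∈ Finset.Ici m, a (π j))⁻¹)]
  refine Finset.prod_congr rfl fun m _ => ?_
  congr 1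
  have hle : ∀ x y : Fin n, x.rev ≤ y ↔ y.rev ≤ x := by
    intro x y; rw [← Fin.rev_le_rev, Fin.rev_rev]
  refine Finset.sum_nbij' Fin.rev Fin.rev ?_ ?_ ?_ ?_ ?_ <;>
    simp [Fin.rev_le_rev, hle, Equiv.Perm.mul_apply]
end
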